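/- arXiv:2104.14706 — 2 statements merged into one kernel-verified Lean document; each statement's English description precedes it below -/
import Mathlib

section
/- Let μ0 and μ1 be probability measures on a measurable space (Ω, F) with a filtration {F_k}_{k≥1} such that μ0 and μ1 are mutually absolutely continuous when restricted to each F_k, and let G_k denote the logarithm of the Radon–Nikodym derivative of μ0|_{F_k} with respect to μ1|_{F_k}. Let T be a stopping time for {F_k} with μ0(T < ∞) = μ1(T < ∞) = 1. Then for every event E in the stopped σ-algebra F_T and every λ > 0: μ0(E) − λ μ1(E) ≤ μ0(G_T ≥ log λ) and μ1(E) − λ μ0(E) ≤ μ1(−G_T ≥ log λ). -/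
open MeasureTheory
open scoped ENNReal

namespace SQHT

variable {Ω : Type*}

/-- The stopped σ-algebra `F_T`: all events `A` with `A ∩ {T = k} ∈ F_k` for every `k`. -/
def stoppedMS [mΩ : MeasurableSpace Ω] (ℱ : Filtration ℕ mΩ) (T : Ω → ℕ∞)
    (hT : ∀ k : ℕ, MeasurableSet[ℱ k] {ω | T ω = (k : ℕ∞)}) : MeasurableSpace Ω where
  MeasurableSet' A := MeasurableSet[mΩ] A ∧
    ∀ k : ℕ, MeasurableSet[ℱ k] (A ∩ {ω | T ω = (k : ℕ∞)})
  measurableSet_empty := ⟨MeasurableSet.empty, fun k => by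
    simp⟩
  measurableSet_compl := by
    rintro A ⟨hA, hAk⟩
    refine ⟨hA.compl, fun k => ?_⟩
    have h : Aᶜ ∩ {ω | T ω = (k : ℕ∞)} =
        {ω | T ω = (k : ℕ∞)} \ (A ∩ {ω | T ω = (k : ℕ∞)}) := by
      ext ω; simp only [Set.mem_inter_iff, Set.mem_compl_iff, Set.mem_setOf_eq,
        Set.mem_diff]; tauto
    rw [h]; exact (hT k).diff (hAk k)
  measurableSet_iUnion := by
    rintro f hf
    exact ⟨MeasurableSet.iUnion fun i => (hf i).1, fun k => by
      rw [Set.iUnion_inter]; exact MeasurableSet.iUnion fun i => (hf i).2 k⟩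

end SQHT

namespace SQHT

/-- Lemma 11(ii) in the paper: for any event `E` in the stopped
σ-algebra `F_T` and any `λ > 0`,
`μ0(E) − λ μ1(E) ≤ μ0(G_T ≥ log λ)` and `μ1(E) − λ μ0(E) ≤ μ1(−G_T ≥ log λ)`. -/
theorem stopped_event_probability_bounds
    [mΩ : MeasurableSpace Ω] (μ0 μ1 : Measure Ω)
    [IsProbabilityMeasure μ0] [IsProbabilityMeasure μ1]
    (ℱ : Filtration ℕ mΩ) (G : ℕ → Ω → ℝ)
    (hGmeas : ∀ k, Measurable[ℱ k] (G k))
    (hRN : ∀ (k : ℕ) (s : Set Ω), MeasurableSet[ℱ k] s →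
      μ0 s = ∫⁻ ω in s, ENNReal.ofReal (Real.exp (G k ω)) ∂μ1)
    (T : Ω → ℕ∞) (hT : ∀ k : ℕ, MeasurableSet[ℱ k] {ω | T ω = (k : ℕ∞)})
    (hT0 : μ0 {ω | T ω = ⊤} = 0) (hT1 : μ1 {ω | T ω = ⊤} = 0)
    (E : Set Ω) (hE : MeasurableSet[stoppedMS ℱ T hT] E)
    (lam : ℝ) (hlam : 0 < lam) :
    (μ0 E).toReal - lam * (μ1 E).toReal ≤
      (μ0 {ω | Real.log lam ≤ G (T ω).toNat ω}).toReal ∧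
    (μ1 E).toReal - lam * (μ0 E).toReal ≤
      (μ1 {ω | Real.log lam ≤ -(G (T ω).toNat ω)}).toReal := by
  classical
  set A : ℕ → Set Ω := fun k => E ∩ {ω | T ω = (k : ℕ∞)} with hA
  have hAmeasF : ∀ k, MeasurableSet[ℱ k] (A k) := fun k => hE.2 k
  have hAmeas : ∀ k, MeasurableSet (A k) := fun k => ℱ.le k _ (hAmeasF k)
  have hAdisj : Pairwise (Function.onFun Disjoint A) := by
    intro i j hij
    refine Set.disjoint_left.2 ?_
    rintro ω ⟨-, hi⟩ ⟨-, hj⟩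
    exact hij (by exact_mod_cast (hi : T ω = _).symm.trans hj)
  have hEdecomp : ∀ (μ : Measure Ω), μ {ω | T ω = ⊤} = 0 → μ E = ∑' k, μ (A k) := by
    intro μ hμ
    have h2 : E \ {ω | T ω = ⊤} = ⋃ k, A k := by
      ext ω
      simp only [Set.mem_diff, Set.mem_setOf_eq, Set.mem_iUnion, hA, Set.mem_inter_iff]
      constructor
      · rintro ⟨hEω, hne⟩
        obtain ⟨k, hk⟩ := WithTop.ne_top_iff_exists.mp hne
        exact ⟨k, hEω, hk.symm⟩
      · rintro ⟨k, hEω, hk⟩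
        exact ⟨hEω, by simp [hk]⟩
    rw [← measure_diff_null hμ, h2, measure_iUnion hAdisj hAmeas]
  have hGm : ∀ k, Measurable (G k) := fun k => (hGmeas k).mono (ℱ.le k) le_rfl
  have hexpPos : ∀ k (ω : Ω), 0 < Real.exp (G k ω) := fun k ω => Real.exp_pos _
  -- first inequality
  set S0 : ℕ → Set Ω := fun k => {ω | Real.log lam ≤ G k ω} with hS0def
  have hS0F : ∀ k, MeasurableSet[ℱ k] (S0 k) := fun k =>
    measurableSet_le measurable_const (hGmeas k)
  have hS0 : ∀ k, MeasurableSet (S0 k) := fun k => ℱ.le k _ (hS0F k)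
  set B0 : ℕ → Set Ω := fun k => {ω | T ω = (k : ℕ∞)} ∩ S0 k with hB0def
  have hB0 : ∀ k, MeasurableSet (B0 k) := fun k => ℱ.le k _ ((hT k).inter (hS0F k))
  have hB0disj : Pairwise (Function.onFun Disjoint B0) := by
    intro i j hij
    refine Set.disjoint_left.2 ?_
    rintro ω ⟨hi, -⟩ ⟨hj, -⟩
    exact hij (by exact_mod_cast (hi : T ω = _).symm.trans hj)
  have key0 : ∀ k, μ0 (A k) ≤ ENNReal.ofReal lam * μ1 (A k) + μ0 (B0 k) := by
    intro k
    have hsplit : μ0 (A k)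
        = ∫⁻ ω in A k ∩ S0 k, ENNReal.ofReal (Real.exp (G k ω)) ∂μ1
          + ∫⁻ ω in A k \ S0 k, ENNReal.ofReal (Real.exp (G k ω)) ∂μ1 := by
      rw [hRN k _ (hAmeasF k), ← lintegral_inter_add_diff _ _ (hS0 k)]
    have h1 : ∫⁻ ω in A k ∩ S0 k, ENNReal.ofReal (Real.exp (G k ω)) ∂μ1 ≤ μ0 (B0 k) := by
      rw [← hRN k _ ((hAmeasF k).inter (hS0F k))]
      exact measure_mono (fun ω hω => ⟨hω.1.2, hω.2⟩)
    have h2 : ∫⁻ ω in A k \ S0 k, ENNReal.ofReal (Real.exp (G k ω)) ∂μ1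
        ≤ ENNReal.ofReal lam * μ1 (A k) := by
      calc ∫⁻ ω in A k \ S0 k, ENNReal.ofReal (Real.exp (G k ω)) ∂μ1
          ≤ ∫⁻ _ in A k \ S0 k, ENNReal.ofReal lam ∂μ1 := by
            refine setLIntegral_mono measurable_const fun ω hω => ?_
            refine ENNReal.ofReal_le_ofReal ?_
            have : G k ω < Real.log lam := lt_of_not_ge hω.2
            calc Real.exp (G k ω) ≤ Real.exp (Real.log lam) := Real.exp_le_exp.2 this.le
              _ = lam := Real.exp_log hlam
        _ = ENNReal.ofReal lam * μ1 (A k \ S0 k) := setLIntegral_const _ _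
        _ ≤ ENNReal.ofReal lam * μ1 (A k) := by
            gcongr
            exact Set.diff_subset
    calc μ0 (A k) = _ := hsplit
      _ ≤ μ0 (B0 k) + ENNReal.ofReal lam * μ1 (A k) := add_le_add h1 h2
      _ = _ := add_comm _ _
  have hBsub0 : (⋃ k, B0 k) ⊆ {ω | Real.log lam ≤ G (T ω).toNat ω} := by
    rintro ω hω
    obtain ⟨k, hk, hS⟩ := Set.mem_iUnion.mp hω
    have : (T ω).toNat = k := by rw [hk]; simp
    have hS' : Real.log lam ≤ G k ω := hS
    simpa [Set.mem_setOf_eq, this] using hS'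
  have h0 : μ0 E ≤ ENNReal.ofReal lam * μ1 E
      + μ0 {ω | Real.log lam ≤ G (T ω).toNat ω} := by
    rw [hEdecomp μ0 hT0, hEdecomp μ1 hT1]
    calc ∑' k, μ0 (A k) ≤ ∑' k, (ENNReal.ofReal lam * μ1 (A k) + μ0 (B0 k)) :=
          ENNReal.tsum_le_tsum key0
      _ = ENNReal.ofReal lam * ∑' k, μ1 (A k) + ∑' k, μ0 (B0 k) := by
          rw [ENNReal.tsum_add, ENNReal.tsum_mul_left]
      _ ≤ _ := by
          gcongr
          rw [← measure_iUnion hB0disj hB0]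
          exact measure_mono hBsub0
  -- second inequality
  set S1 : ℕ → Set Ω := fun k => {ω | Real.log lam ≤ -(G k ω)} with hS1def
  have hS1F : ∀ k, MeasurableSet[ℱ k] (S1 k) := fun k =>
    measurableSet_le measurable_const (hGmeas k).neg
  have hS1 : ∀ k, MeasurableSet (S1 k) := fun k => ℱ.le k _ (hS1F k)
  set B1 : ℕ → Set Ω := fun k => {ω | T ω = (k : ℕ∞)} ∩ S1 k with hB1def
  have hB1 : ∀ k, MeasurableSet (B1 k) := fun k => ℱ.le k _ ((hT k).inter (hS1F k))
  have hB1disj : Pairwise (Function.onFun Disjoint B1) := by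
    intro i j hij
    refine Set.disjoint_left.2 ?_
    rintro ω ⟨hi, -⟩ ⟨hj, -⟩
    exact hij (by exact_mod_cast (hi : T ω = _).symm.trans hj)
  have key1 : ∀ k, μ1 (A k) ≤ ENNReal.ofReal lam * μ0 (A k) + μ1 (B1 k) := by
    intro k
    have hsplit : μ1 (A k) = μ1 (A k ∩ S1 k) + μ1 (A k \ S1 k) :=
      (measure_inter_add_diff _ (hS1 k)).symm
    have h1 : μ1 (A k ∩ S1 k) ≤ μ1 (B1 k) :=
      measure_mono (fun ω hω => ⟨hω.1.2, hω.2⟩)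
    have h2 : μ1 (A k \ S1 k) ≤ ENNReal.ofReal lam * μ0 (A k) := by
      have hmeasg : Measurable fun ω => ENNReal.ofReal (Real.exp (G k ω)) :=
        (Real.measurable_exp.comp (hGm k)).ennreal_ofReal
      calc μ1 (A k \ S1 k) = ∫⁻ _ in A k \ S1 k, 1 ∂μ1 := (setLIntegral_one _).symm
        _ ≤ ∫⁻ ω in A k \ S1 k, ENNReal.ofReal lam * ENNReal.ofReal (Real.exp (G k ω)) ∂μ1 := by
            refine setLIntegral_mono (measurable_const.mul hmeasg) fun ω hω => ?_
            have hlt : -(G k ω) < Real.log lam := lt_of_not_ge hω.2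
            have h3 : Real.exp (-(G k ω)) < lam := by
              calc Real.exp (-(G k ω)) < Real.exp (Real.log lam) := Real.exp_lt_exp.2 hlt
                _ = lam := Real.exp_log hlam
            rw [Real.exp_neg] at h3
            have h4 : 1 ≤ lam * Real.exp (G k ω) := by
              rw [inv_lt_iff_one_lt_mul₀ (hexpPos k ω)] at h3
              linarith [h3]
            calc (1 : ℝ≥0∞) ≤ ENNReal.ofReal (lam * Real.exp (G k ω)) := by
                  rw [ENNReal.one_le_ofReal]; exact h4
              _ = _ := ENNReal.ofReal_mul hlam.le
        _ = ENNReal.ofReal lam * ∫⁻ ω in A k \ S1 k, ENNReal.ofReal (Real.exp (G k ω)) ∂μ1 :=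
            lintegral_const_mul _ hmeasg
        _ = ENNReal.ofReal lam * μ0 (A k \ S1 k) := by
            rw [← hRN k _ ((hAmeasF k).diff (hS1F k))]
        _ ≤ ENNReal.ofReal lam * μ0 (A k) := by gcongr; exact Set.diff_subset
    calc μ1 (A k) = _ := hsplit
      _ ≤ μ1 (B1 k) + ENNReal.ofReal lam * μ0 (A k) := add_le_add h1 h2
      _ = _ := add_comm _ _
  have hBsub1 : (⋃ k, B1 k) ⊆ {ω | Real.log lam ≤ -(G (T ω).toNat ω)} := by
    rintro ω hω
    obtain ⟨k, hk, hS⟩ := Set.mem_iUnion.mp hω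
    have : (T ω).toNat = k := by rw [hk]; simp
    have hS' : Real.log lam ≤ -(G k ω) := hS
    simpa [Set.mem_setOf_eq, this] using hS'
  have h1' : μ1 E ≤ ENNReal.ofReal lam * μ0 E
      + μ1 {ω | Real.log lam ≤ -(G (T ω).toNat ω)} := by
    rw [hEdecomp μ0 hT0, hEdecomp μ1 hT1]
    calc ∑' k, μ1 (A k) ≤ ∑' k, (ENNReal.ofReal lam * μ0 (A k) + μ1 (B1 k)) :=
          ENNReal.tsum_le_tsum key1
      _ = ENNReal.ofReal lam * ∑' k, μ0 (A k) + ∑' k, μ1 (B1 k) := by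
          rw [ENNReal.tsum_add, ENNReal.tsum_mul_left]
      _ ≤ _ := by
          gcongr
          rw [← measure_iUnion hB1disj hB1]
          exact measure_mono hBsub1
  -- convert to reals
  constructor
  · have hne : ENNReal.ofReal lam * μ1 E
        + μ0 {ω | Real.log lam ≤ G (T ω).toNat ω} ≠ ⊤ := by
      refine ENNReal.add_ne_top.2 ⟨ENNReal.mul_ne_top ENNReal.ofReal_ne_top (measure_ne_top _ _), measure_ne_top _ _⟩
    have := ENNReal.toReal_mono hne h0
    rw [ENNReal.toReal_add (ENNReal.mul_ne_top ENNReal.ofReal_ne_top (measure_ne_top _ _))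
        (measure_ne_top _ _), ENNReal.toReal_mul, ENNReal.toReal_ofReal hlam.le] at this
    linarith
  · have hne : ENNReal.ofReal lam * μ0 E
        + μ1 {ω | Real.log lam ≤ -(G (T ω).toNat ω)} ≠ ⊤ := by
      refine ENNReal.add_ne_top.2 ⟨ENNReal.mul_ne_top ENNReal.ofReal_ne_top (measure_ne_top _ _), measure_ne_top _ _⟩
    have := ENNReal.toReal_mono hne h1'
    rw [ENNReal.toReal_add (ENNReal.mul_ne_top ENNReal.ofReal_ne_top (measure_ne_top _ _))
        (measure_ne_top _ _), ENNReal.toReal_mul, ENNReal.toReal_ofReal hlam.le] at this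
    linarith

end SQHT
end

section
/- In the sign-adaptive SQPRT construction below, with ρ0 ≠ ρ1, there exists, for every sufficiently small λ > 0, a constant c ∈ (0,1) such that for all k ≥ 1: E_0[e^{−λ S_k}] ≤ c^k and P_0(S_k < 0) ≤ c^k. -/
open Filter
open scoped ENNReal ComplexOrder Classical

namespace SQHT

/-- `d × d` complex matrices over an index type `ι`. -/
abbrev Mat (ι : Type) := Matrix ι ι ℂ

variable {d : ℕ}

/-- A quantum state: positive semidefinite with unit trace. -/
def IsState (ρ : Mat (Fin d)) : Prop := ρ.PosSemidef ∧ ρ.trace = 1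

/-- Born probability of outcome `x` when measuring `m` on state `ρ`. -/
noncomputable def outProb (ρ : Mat (Fin d)) (m : Fin d → Mat (Fin d)) (x : Fin d) : ℝ :=
  ((ρ * m x).trace).re

/-- Classical relative entropy (KL divergence) of two pmfs on a finite set,
with the convention `0 log 0 = 0`. -/
noncomputable def KL {X : Type*} [Fintype X] (P Q : X → ℝ) : ℝ :=
  ∑ x, if P x = 0 then 0 else P x * Real.log (P x / Q x)

/-- A rank-one projective measurement with `d` outcomes. -/
def IsRankOnePVM (m : Fin d → Mat (Fin d)) : Prop :=
  (∀ x, (m x).PosSemidef) ∧ ∑ x, m x = 1 ∧ (∀ x, m x * m x = m x) ∧ ∀ x, (m x).rank = 1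

/-- The measured relative entropy `D_M(ρ0‖ρ1)`. -/
noncomputable def Dmeas (ρ0 ρ1 : Mat (Fin d)) : ℝ :=
  ⨆ m : {m : Fin d → Mat (Fin d) // IsRankOnePVM m}, KL (outProb ρ0 m.1) (outProb ρ1 m.1)

/-- Single-outcome log-likelihood ratio for measurement `m`. -/
noncomputable def llr (ρ0 ρ1 : Mat (Fin d)) (m : Fin d → Mat (Fin d)) (x : Fin d) : ℝ :=
  Real.log (outProb ρ0 m x) - Real.log (outProb ρ1 m x)

/-- The sign-adaptive SQPRT dynamics: given the initial coin `b` (`M_1 = m0` if `b`,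
else `M_1 = m1`) and the first `k` outcomes, return the pair consisting of the
measurement `M_{k+1}` to be used next and the current log-likelihood sum `S_k`;
for `k ≥ 1`, `M_{k+1} = m0` if `S_k ≥ 0` and `M_{k+1} = m1` otherwise. -/
noncomputable def run (ρ0 ρ1 : Mat (Fin d)) (m0 m1 : Fin d → Mat (Fin d)) (b : Bool) :
    (k : ℕ) → (Fin k → Fin d) → ((Fin d → Mat (Fin d)) × ℝ)
  | 0, _ => (bif b then m0 else m1, 0)
  | (k + 1), x =>
      let p := run ρ0 ρ1 m0 m1 b k (Fin.init x)
      let Snew := p.2 + llr ρ0 ρ1 p.1 (x (Fin.last k))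
      (if 0 ≤ Snew then m0 else m1, Snew)

/-- The value `S_k` of the accumulated log-likelihood ratio along a path. -/
noncomputable def Sval (ρ0 ρ1 : Mat (Fin d)) (m0 m1 : Fin d → Mat (Fin d)) (b : Bool)
    (k : ℕ) (x : Fin k → Fin d) : ℝ :=
  (run ρ0 ρ1 m0 m1 b k x).2

/-- The probability, when the true state is `ρ`, of the initial coin being `b`
and the first `k` outcomes being `x` (the coin is uniform on two values). -/
noncomputable def pathProb (ρ0 ρ1 : Mat (Fin d)) (m0 m1 : Fin d → Mat (Fin d))
    (ρ : Mat (Fin d)) (b : Bool) : (k : ℕ) → (Fin k → Fin d) → ℝ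
  | 0, _ => 1 / 2
  | (k + 1), x =>
      pathProb ρ0 ρ1 m0 m1 ρ b k (Fin.init x) *
        outProb ρ ((run ρ0 ρ1 m0 m1 b k (Fin.init x)).1) (x (Fin.last k))

/-- Expectation, under the true state `ρ0`, of a path functional after `k` steps. -/
noncomputable def E0 (ρ0 ρ1 : Mat (Fin d)) (m0 m1 : Fin d → Mat (Fin d)) (k : ℕ)
    (f : Bool → (Fin k → Fin d) → ℝ) : ℝ :=
  ∑ b : Bool, ∑ x : Fin k → Fin d, pathProb ρ0 ρ1 m0 m1 ρ0 b k x * f b x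

/-- `P_0(S_k < 0)` for the sign-adaptive SQPRT. -/
noncomputable def probSneg (ρ0 ρ1 : Mat (Fin d)) (m0 m1 : Fin d → Mat (Fin d)) (k : ℕ) : ℝ :=
  ∑ b : Bool, ∑ x : Fin k → Fin d,
    if Sval ρ0 ρ1 m0 m1 b k x < 0 then pathProb ρ0 ρ1 m0 m1 ρ0 b k x else 0

end SQHT


namespace SQHT

open Matrix Finset

variable {d : ℕ}

lemma trace_eq_sum_eigs {A : Mat (Fin d)} (hA : A.IsHermitian) :
    A.trace = ((∑ i, hA.eigenvalues i : ℝ) : ℂ) := by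
  conv_lhs => rw [hA.spectral_theorem, Unitary.conjStarAlgAut_apply]
  rw [Matrix.trace_mul_cycle, Unitary.coe_star_mul_self, one_mul, Matrix.trace_diagonal]
  push_cast
  rfl

lemma trace_re_eq_sum_eigs {A : Mat (Fin d)} (hA : A.IsHermitian) :
    A.trace.re = ∑ i, hA.eigenvalues i := by
  rw [trace_eq_sum_eigs hA, Complex.ofReal_re]

lemma trace_re_nonneg {A : Mat (Fin d)} (hA : A.PosSemidef) : 0 ≤ A.trace.re := by
  rw [trace_re_eq_sum_eigs hA.1]
  exact Finset.sum_nonneg fun i _ => hA.eigenvalues_nonneg i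

lemma exists_eigenvalue_ne_zero {A : Mat (Fin d)} (hA : A.IsHermitian) (h0 : A ≠ 0) :
    ∃ i, hA.eigenvalues i ≠ 0 := by
  by_contra h
  push_neg at h
  apply h0
  have hs := hA.spectral_theorem
  have hz : (RCLike.ofReal ∘ hA.eigenvalues : Fin d → ℂ) = 0 := funext fun i => by simp [h i]
  rw [hz] at hs
  have hdz : Matrix.diagonal (0 : Fin d → ℂ) = 0 := by
    ext i j
    by_cases hij : i = j <;> simp [Matrix.diagonal_apply, hij]
  rw [hdz, map_zero] at hs
  exact hs

lemma trace_re_pos {A : Mat (Fin d)} (hA : A.PosSemidef) (h0 : A ≠ 0) : 0 < A.trace.re := by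
  rw [trace_re_eq_sum_eigs hA.1]
  obtain ⟨i, hi⟩ := exists_eigenvalue_ne_zero hA.1 h0
  exact Finset.sum_pos' (fun j _ => hA.eigenvalues_nonneg j)
    ⟨i, Finset.mem_univ i, lt_of_le_of_ne (hA.eigenvalues_nonneg i) (Ne.symm hi)⟩

lemma posSemidef_sub_smul {ρ : Mat (Fin d)} (hd : 0 < d) (hρ : ρ.PosDef) :
    ∃ c : ℝ, 0 < c ∧ (ρ - (c : ℂ) • 1).PosSemidef := by
  haveI : Nonempty (Fin d) := Fin.pos_iff_nonempty.mp hd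
  have hne : (Finset.univ : Finset (Fin d)).Nonempty := Finset.univ_nonempty
  set c := Finset.univ.inf' hne hρ.isHermitian.eigenvalues with hc
  have hcpos : 0 < c := by
    rw [hc, Finset.lt_inf'_iff]
    exact fun i _ => hρ.eigenvalues_pos i
  refine ⟨c, hcpos, ?_⟩
  set U := (hρ.isHermitian.eigenvectorUnitary : Mat (Fin d)) with hU
  have hUU : U * star U = 1 := Unitary.coe_mul_star_self _
  have h1 : ((c:ℂ) • (1 : Mat (Fin d))) = U * ((c:ℂ) • 1) * star U := by
    rw [mul_smul_comm, mul_one, smul_mul_assoc, hUU]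
  have key : ρ - (c:ℂ) • 1
      = U * (Matrix.diagonal fun i => ((hρ.isHermitian.eigenvalues i - c : ℝ) : ℂ)) * star U := by
    conv_lhs => rw [hρ.isHermitian.spectral_theorem, Unitary.conjStarAlgAut_apply, h1]
    rw [← hU, ← sub_mul, ← mul_sub]
    congr 2
    ext i j
    by_cases hij : i = j <;>
      simp [Matrix.diagonal_apply, Matrix.one_apply, hij, Matrix.sub_apply, Complex.ofReal_sub]
  rw [key, Matrix.star_eq_conjTranspose]
  refine Matrix.PosSemidef.mul_mul_conjTranspose_same (Matrix.posSemidef_diagonal_iff.mpr fun i => ?_) U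
  rw [Complex.zero_le_real]
  have := Finset.inf'_le hρ.isHermitian.eigenvalues (Finset.mem_univ i)
  linarith

lemma trace_mul_re_nonneg {A B : Mat (Fin d)} (hA : A.PosSemidef) (hB : B.PosSemidef) :
    0 ≤ ((A * B).trace).re := by
  open scoped MatrixOrder in
  have hBn : 0 ≤ B := hB.nonneg
  set S := CFC.sqrt B with hSdef
  have hSS : S * S = B := CFC.sqrt_mul_sqrt_self B hBn
  have hSpsd : S.PosSemidef := (CFC.sqrt_nonneg B).posSemidef
  have h : A * B = A * (S * S) := by rw [hSS]
  have h2 : (A * (S * S)).trace = (S * A * S).trace := by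
    rw [← mul_assoc, Matrix.trace_mul_comm, ← mul_assoc]
  have hPSD : (S * A * S).PosSemidef := by
    have := hA.mul_mul_conjTranspose_same S
    rwa [hSpsd.isHermitian.eq] at this
  rw [h, h2]
  exact trace_re_nonneg hPSD

lemma trace_smul_re (c : ℝ) (A : Mat (Fin d)) : (((c:ℂ) • A).trace).re = c * A.trace.re := by
  rw [Matrix.trace_smul, smul_eq_mul, Complex.mul_re]
  simp

lemma trace_mul_re_ge {ρ A : Mat (Fin d)} {c : ℝ}
    (hsub : (ρ - (c:ℂ) • 1).PosSemidef) (hA : A.PosSemidef) :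
    c * A.trace.re ≤ ((ρ * A).trace).re := by
  have hsplit : ρ * A = (ρ - (c:ℂ) • 1) * A + (c:ℂ) • A := by
    rw [sub_mul, smul_mul_assoc, one_mul, sub_add_cancel]
  rw [hsplit, Matrix.trace_add, Complex.add_re, trace_smul_re]
  have := trace_mul_re_nonneg hsub hA
  linarith

lemma trace_mul_re_pos {ρ A : Mat (Fin d)} (hd : 0 < d) (hρ : ρ.PosDef)
    (hA : A.PosSemidef) (hA0 : A ≠ 0) : 0 < ((ρ * A).trace).re := by
  obtain ⟨c, hc, hsub⟩ := posSemidef_sub_smul hd hρ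
  have h1 := trace_mul_re_ge hsub hA
  have h2 := trace_re_pos hA hA0
  nlinarith

lemma outProb_nonneg {ρ : Mat (Fin d)} {m : Fin d → Mat (Fin d)}
    (hρ : ρ.PosSemidef) (hm : (m x).PosSemidef) : 0 ≤ outProb ρ m x :=
  trace_mul_re_nonneg hρ hm

lemma IsRankOnePVM.ne_zero {m : Fin d → Mat (Fin d)} (hm : IsRankOnePVM m) (x : Fin d) :
    m x ≠ 0 := by
  intro h
  have := hm.2.2.2 x
  rw [h, Matrix.rank_zero] at this
  exact zero_ne_one this

lemma outProb_pos {ρ : Mat (Fin d)} {m : Fin d → Mat (Fin d)} (hd : 0 < d)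
    (hρ : ρ.PosDef) (hm : IsRankOnePVM m) (x : Fin d) : 0 < outProb ρ m x :=
  trace_mul_re_pos hd hρ (hm.1 x) (hm.ne_zero x)

lemma sum_outProb {ρ : Mat (Fin d)} {m : Fin d → Mat (Fin d)}
    (hρ : IsState ρ) (hm : ∑ x, m x = 1) : ∑ x, outProb ρ m x = 1 := by
  unfold outProb
  rw [← Complex.re_sum, ← Matrix.trace_sum, ← Finset.mul_sum, hm, mul_one, hρ.2]
  simp

lemma trace_re_proj {A : Mat (Fin d)} (hA : A.PosSemidef) (hidem : A * A = A)
    (hrank : A.rank = 1) : A.trace.re = 1 := by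
  have hH := hA.isHermitian
  have hdiag : star (hH.eigenvectorUnitary : Mat (Fin d)) * A * (hH.eigenvectorUnitary : Mat (Fin d))
      = Matrix.diagonal (RCLike.ofReal ∘ hH.eigenvalues) := by
    simpa only [Unitary.conjStarAlgAut_apply, Unitary.coe_star, star_star]
      using hH.conjStarAlgAut_star_eigenvectorUnitary
  set U := (hH.eigenvectorUnitary : Mat (Fin d)) with hUdef
  have hUU : U * star U = 1 := Unitary.coe_mul_star_self _
  have hmul : (star U * A * U) * (star U * A * U) = star U * A * U := by
    have e1 : (star U * A * U) * (star U * A * U) = star U * (A * (U * star U) * A) * U := by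
      noncomm_ring
    rw [e1, hUU, mul_one, hidem]
  rw [hdiag, Matrix.diagonal_mul_diagonal] at hmul
  have heig : ∀ i, hH.eigenvalues i = 0 ∨ hH.eigenvalues i = 1 := by
    intro i
    have h := congrFun (Matrix.diagonal_injective hmul) i
    have h' : hH.eigenvalues i * hH.eigenvalues i = hH.eigenvalues i := by
      have := h
      simp only [Function.comp_apply, Pi.mul_apply] at this
      exact_mod_cast this
    rcases mul_eq_zero.mp (show (hH.eigenvalues i - 1) * hH.eigenvalues i = 0 by nlinarith) with h2 | h2
    · right; linarith
    · left; exact h2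
  have hcard : Fintype.card {i // hH.eigenvalues i ≠ 0} = 1 := by
    rw [← hH.rank_eq_card_non_zero_eigs, hrank]
  rw [trace_re_eq_sum_eigs hH]
  rw [← Finset.sum_filter_ne_zero]
  have hone : ∀ i ∈ Finset.univ.filter (fun i => hH.eigenvalues i ≠ 0), hH.eigenvalues i = 1 := by
    intro i hi
    rcases heig i with h2 | h2
    · exact absurd h2 (Finset.mem_filter.mp hi).2
    · exact h2
  rw [Finset.sum_congr rfl hone, Finset.sum_const, nsmul_eq_mul, mul_one]
  rw [← Fintype.card_subtype, hcard]
  norm_num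

/-- The rank-one PVM associated with a unitary matrix: projections onto its columns. -/
noncomputable def projOf (U : Mat (Fin d)) (x : Fin d) : Mat (Fin d) :=
  U * Matrix.diagonal (Pi.single x 1) * star U

lemma single_mul_single (x : Fin d) :
    (Pi.single x 1 : Fin d → ℂ) * Pi.single x 1 = Pi.single x 1 := by
  funext i
  by_cases h : i = x <;> simp [Pi.single_apply, h]

lemma isRankOnePVM_projOf {U : Mat (Fin d)} (hU : U ∈ Matrix.unitaryGroup (Fin d) ℂ) :
    IsRankOnePVM (projOf U) := by
  have hUU : U * star U = 1 := (Matrix.mem_unitaryGroup_iff.mp hU)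
  have hUU' : star U * U = 1 := (Matrix.mem_unitaryGroup_iff'.mp hU)
  have hdet : IsUnit U.det := by
    have : U.det * (star U).det = 1 := by rw [← Matrix.det_mul, hUU, Matrix.det_one]
    exact IsUnit.of_mul_eq_one _ this
  have hdet' : IsUnit (star U).det := by
    have : (star U).det * U.det = 1 := by rw [← Matrix.det_mul, hUU', Matrix.det_one]
    exact IsUnit.of_mul_eq_one _ this
  refine ⟨fun x => ?_, ?_, fun x => ?_, fun x => ?_⟩
  · have hdg : (Matrix.diagonal (Pi.single x 1 : Fin d → ℂ)).PosSemidef := by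
      refine Matrix.posSemidef_diagonal_iff.mpr fun i => ?_
      by_cases h : i = x <;> simp [Pi.single_apply, h]
    have := hdg.mul_mul_conjTranspose_same U
    rwa [← Matrix.star_eq_conjTranspose] at this
  · have hsum : ∑ x, Matrix.diagonal (Pi.single x 1 : Fin d → ℂ) = 1 := by
      ext i j
      rw [Matrix.sum_apply]
      by_cases h : i = j <;>
        simp [Matrix.diagonal_apply, Matrix.one_apply, h, Pi.single_apply]
    unfold projOf
    rw [← Finset.sum_mul, ← Finset.mul_sum, hsum, mul_one, hUU]
  · unfold projOf
    have e1 : U * Matrix.diagonal (Pi.single x 1) * star U * (U * Matrix.diagonal (Pi.single x 1) * star U)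
        = U * (Matrix.diagonal (Pi.single x 1) * (star U * U) * Matrix.diagonal (Pi.single x 1)) * star U := by
      noncomm_ring
    rw [e1, hUU', mul_one, Matrix.diagonal_mul_diagonal]
    have h2 : (fun i => (Pi.single x 1 : Fin d → ℂ) i * (Pi.single x 1 : Fin d → ℂ) i)
        = (Pi.single x 1 : Fin d → ℂ) := by
      funext i
      by_cases h : i = x <;> simp [Pi.single_apply, h]
    rw [h2]
  · unfold projOf
    rw [Matrix.rank_mul_eq_left_of_isUnit_det _ _ hdet', Matrix.rank_mul_eq_right_of_isUnit_det _ _ hdet,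
      Matrix.rank_diagonal]
    have : ∀ i : Fin d, (Pi.single x 1 : Fin d → ℂ) i ≠ 0 ↔ i = x := by
      intro i
      by_cases h : i = x <;> simp [Pi.single_apply, h]
    rw [Fintype.card_congr (Equiv.subtypeEquivRight this)]
    exact Fintype.card_subtype_eq x

lemma trace_mul_diagonal_single (M : Mat (Fin d)) (x : Fin d) :
    (M * Matrix.diagonal (Pi.single x 1)).trace = M x x := by
  rw [Matrix.trace_mul_comm, Matrix.trace]
  have h : ∀ i, (Matrix.diagonal (Pi.single x 1) * M).diag i
      = (Pi.single x 1 : Fin d → ℂ) i * M i i := fun i => by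
    simp [Matrix.diag, Matrix.diagonal_mul]
  rw [Finset.sum_congr rfl fun i _ => h i]
  rw [Finset.sum_eq_single x (fun j _ hj => by simp [Pi.single_apply, hj])
    (fun h => absurd (Finset.mem_univ x) h)]
  simp

lemma outProb_projOf {U : Mat (Fin d)} (hU : U ∈ Matrix.unitaryGroup (Fin d) ℂ)
    (ρ : Mat (Fin d)) (x : Fin d) :
    outProb ρ (projOf U) x = ((star U * ρ * U) x x).re := by
  unfold outProb projOf
  have e1 : ρ * (U * Matrix.diagonal (Pi.single x 1) * star U)
      = (ρ * U * Matrix.diagonal (Pi.single x 1)) * star U := by noncomm_ring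
  rw [e1, Matrix.trace_mul_comm]
  have e2 : star U * (ρ * U * Matrix.diagonal (Pi.single x 1))
      = (star U * ρ * U) * Matrix.diagonal (Pi.single x 1) := by noncomm_ring
  rw [e2, trace_mul_diagonal_single]

lemma exists_distinguishing {σ τ : Mat (Fin d)} (hσ : σ.IsHermitian) (hτ : τ.IsHermitian)
    (hne : σ ≠ τ) :
    ∃ m : Fin d → Mat (Fin d), IsRankOnePVM m ∧ ∃ x, outProb σ m x ≠ outProb τ m x := by
  have hΔ : (σ - τ).IsHermitian := hσ.sub hτ
  set U := (hΔ.eigenvectorUnitary : Mat (Fin d)) with hUdef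
  have hUmem : U ∈ Matrix.unitaryGroup (Fin d) ℂ := hΔ.eigenvectorUnitary.2
  refine ⟨projOf U, isRankOnePVM_projOf hUmem, ?_⟩
  obtain ⟨x, hx⟩ := exists_eigenvalue_ne_zero hΔ (sub_ne_zero.mpr hne)
  refine ⟨x, ?_⟩
  rw [outProb_projOf hUmem, outProb_projOf hUmem]
  have hsub : star U * σ * U - star U * τ * U = star U * (σ - τ) * U := by noncomm_ring
  have hdg : star U * (σ - τ) * U = Matrix.diagonal (RCLike.ofReal ∘ hΔ.eigenvalues) := by
    simpa only [Unitary.conjStarAlgAut_apply, Unitary.coe_star, star_star]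
      using hΔ.conjStarAlgAut_star_eigenvectorUnitary
  have hxval : ((star U * (σ - τ) * U) x x) = ((hΔ.eigenvalues x : ℝ) : ℂ) := by
    rw [hdg]
    simp [Matrix.diagonal_apply]
  have h3 : ((hΔ.eigenvalues x : ℝ) : ℂ)
      = (star U * σ * U) x x - (star U * τ * U) x x := by
    rw [← hxval]
    have h5 := congrFun (congrFun hsub x) x
    rw [← h5]
    simp [Matrix.sub_apply]
  intro h
  apply hx
  have h4 := congrArg Complex.re h3
  rw [Complex.sub_re, Complex.ofReal_re] at h4
  rw [h4, h, sub_self]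

lemma KL_self (P : Fin d → ℝ) : KL P P = 0 := by
  unfold KL
  refine Finset.sum_eq_zero fun x _ => ?_
  split
  · rfl
  · rename_i h
    rw [div_self h, Real.log_one, mul_zero]

lemma KL_pos {P Q : Fin d → ℝ} (hP : ∀ x, 0 < P x) (hQ : ∀ x, 0 < Q x)
    (hsP : ∑ x, P x = 1) (hsQ : ∑ x, Q x = 1) (hne : P ≠ Q) : 0 < KL P Q := by
  obtain ⟨x0, hx0⟩ := Function.ne_iff.mp hne
  have key : ∑ x, P x * Real.log (Q x / P x) < 0 := by
    have hle : ∀ x ∈ Finset.univ, P x * Real.log (Q x / P x) ≤ Q x - P x := by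
      intro x _
      have h1 := Real.log_le_sub_one_of_pos (div_pos (hQ x) (hP x))
      have h2 : P x * Real.log (Q x / P x) ≤ P x * (Q x / P x - 1) :=
        mul_le_mul_of_nonneg_left h1 (hP x).le
      have h3 : P x * (Q x / P x - 1) = Q x - P x := by
        rw [mul_sub, mul_div_cancel₀ _ (hP x).ne', mul_one]
      linarith
    have hlt : P x0 * Real.log (Q x0 / P x0) < Q x0 - P x0 := by
      have hq1 : Q x0 / P x0 ≠ 1 := by
        intro h
        rw [div_eq_iff (hP x0).ne', one_mul] at h
        exact hx0 h.symm
      have h1 := Real.log_lt_sub_one_of_pos (div_pos (hQ x0) (hP x0)) hq1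
      have h2 : P x0 * Real.log (Q x0 / P x0) < P x0 * (Q x0 / P x0 - 1) :=
        mul_lt_mul_of_pos_left h1 (hP x0)
      have h3 : P x0 * (Q x0 / P x0 - 1) = Q x0 - P x0 := by
        rw [mul_sub, mul_div_cancel₀ _ (hP x0).ne', mul_one]
      linarith
    calc ∑ x, P x * Real.log (Q x / P x) < ∑ x, (Q x - P x) :=
          Finset.sum_lt_sum hle ⟨x0, Finset.mem_univ x0, hlt⟩
      _ = 0 := by rw [Finset.sum_sub_distrib, hsP, hsQ]; ring
  have hKL : KL P Q = -∑ x, P x * Real.log (Q x / P x) := by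
    unfold KL
    rw [← Finset.sum_neg_distrib]
    refine Finset.sum_congr rfl fun x _ => ?_
    rw [if_neg (hP x).ne']
    rw [Real.log_div (hQ x).ne' (hP x).ne', Real.log_div (hP x).ne' (hQ x).ne']
    ring
  rw [hKL]
  linarith

lemma Dmeas_pos (hd : 0 < d) {σ τ : Mat (Fin d)} (hσ : IsState σ) (hτ : IsState τ)
    (hσd : σ.PosDef) (hτd : τ.PosDef) (hne : σ ≠ τ) : 0 < Dmeas σ τ := by
  obtain ⟨c, hc, hsub⟩ := posSemidef_sub_smul hd hτd
  have hbdd : BddAbove (Set.range fun m : {m : Fin d → Mat (Fin d) // IsRankOnePVM m} =>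
      KL (outProb σ m.1) (outProb τ m.1)) := by
    refine ⟨d * max 0 (Real.log (1/c)), ?_⟩
    rintro _ ⟨m, rfl⟩
    have hQ : ∀ x, c ≤ outProb τ m.1 x := by
      intro x
      have htr : (m.1 x).trace.re = 1 :=
        trace_re_proj (m.2.1 x) (m.2.2.2.1 x) (m.2.2.2.2 x)
      have := trace_mul_re_ge hsub (m.2.1 x)
      rw [htr, mul_one] at this
      exact this
    have hPnn : ∀ x, 0 ≤ outProb σ m.1 x := fun x => outProb_nonneg hσ.1 (m.2.1 x)
    have hPsum : ∑ x, outProb σ m.1 x = 1 := sum_outProb hσ m.2.2.1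
    have hPle : ∀ x, outProb σ m.1 x ≤ 1 := by
      intro x
      rw [← hPsum]
      exact Finset.single_le_sum (fun i _ => hPnn i) (Finset.mem_univ x)
    have hterm : ∀ x ∈ Finset.univ, (if outProb σ m.1 x = 0 then 0 else
        outProb σ m.1 x * Real.log (outProb σ m.1 x / outProb τ m.1 x))
        ≤ max 0 (Real.log (1/c)) := by
      intro x _
      split
      · exact le_max_left 0 _
      · rename_i h
        have hPpos : 0 < outProb σ m.1 x := lt_of_le_of_ne (hPnn x) (Ne.symm h)
        have hQpos : 0 < outProb τ m.1 x := lt_of_lt_of_le hc (hQ x)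
        have hdiv : outProb σ m.1 x / outProb τ m.1 x ≤ 1 / c :=
          div_le_div₀ zero_le_one (hPle x) hc (hQ x)
        have hlog : Real.log (outProb σ m.1 x / outProb τ m.1 x) ≤ Real.log (1/c) :=
          Real.log_le_log (div_pos hPpos hQpos) hdiv
        rcases le_or_gt (Real.log (outProb σ m.1 x / outProb τ m.1 x)) 0 with hz | hz
        · have := mul_nonpos_of_nonneg_of_nonpos (hPnn x) hz
          exact this.trans (le_max_left 0 _)
        · have h1 : outProb σ m.1 x * Real.log (outProb σ m.1 x / outProb τ m.1 x)
              ≤ 1 * Real.log (outProb σ m.1 x / outProb τ m.1 x) :=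
            mul_le_mul_of_nonneg_right (hPle x) hz.le
          rw [one_mul] at h1
          exact (h1.trans hlog).trans (le_max_right 0 _)
    calc KL (outProb σ m.1) (outProb τ m.1)
        ≤ ∑ _x : Fin d, max 0 (Real.log (1/c)) := Finset.sum_le_sum hterm
      _ = d * max 0 (Real.log (1/c)) := by
          rw [Finset.sum_const, Finset.card_univ, Fintype.card_fin, nsmul_eq_mul]
  obtain ⟨m, hm, x0, hx0⟩ := exists_distinguishing hσd.isHermitian hτd.isHermitian hne
  have hKLpos : 0 < KL (outProb σ m) (outProb τ m) := by
    refine KL_pos (fun x => outProb_pos hd hσd hm x) (fun x => outProb_pos hd hτd hm x)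
      (sum_outProb hσ hm.2.1) (sum_outProb hτ hm.2.1) ?_
    intro h
    exact hx0 (congrFun h x0)
  exact lt_of_lt_of_le hKLpos (le_ciSup hbdd ⟨m, hm⟩)

lemma phi_lt_one {lam : ℝ} (hl0 : 0 < lam) (hl1 : lam < 1) {P Q : Fin d → ℝ}
    (hP : ∀ x, 0 < P x) (hQ : ∀ x, 0 < Q x)
    (hsP : ∑ x, P x = 1) (hsQ : ∑ x, Q x = 1) {x0 : Fin d} (hx0 : P x0 ≠ Q x0) :
    ∑ x, P x * Real.exp (-lam * (Real.log (P x) - Real.log (Q x))) < 1 := by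
  have hterm : ∀ x, P x * Real.exp (-lam * (Real.log (P x) - Real.log (Q x)))
      = Real.exp ((1 - lam) * Real.log (P x) + lam * Real.log (Q x)) := by
    intro x
    rw [show (1 - lam) * Real.log (P x) + lam * Real.log (Q x)
        = Real.log (P x) + -lam * (Real.log (P x) - Real.log (Q x)) by ring,
      Real.exp_add, Real.exp_log (hP x)]
  have hle : ∀ x ∈ Finset.univ, P x * Real.exp (-lam * (Real.log (P x) - Real.log (Q x)))
      ≤ (1 - lam) * P x + lam * Q x := by
    intro x _
    rw [hterm x]
    have h := convexOn_exp.2 (Set.mem_univ (Real.log (P x))) (Set.mem_univ (Real.log (Q x)))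
      (by linarith : (0:ℝ) ≤ 1 - lam) hl0.le (by ring)
    simp only [smul_eq_mul] at h
    calc Real.exp ((1 - lam) * Real.log (P x) + lam * Real.log (Q x))
        ≤ (1 - lam) * Real.exp (Real.log (P x)) + lam * Real.exp (Real.log (Q x)) := h
      _ = (1 - lam) * P x + lam * Q x := by rw [Real.exp_log (hP x), Real.exp_log (hQ x)]
  have hlt : P x0 * Real.exp (-lam * (Real.log (P x0) - Real.log (Q x0)))
      < (1 - lam) * P x0 + lam * Q x0 := by
    rw [hterm x0]
    have hlogne : Real.log (P x0) ≠ Real.log (Q x0) := by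
      intro h
      exact hx0 (by rw [← Real.exp_log (hP x0), h, Real.exp_log (hQ x0)])
    have h := strictConvexOn_exp.2 (Set.mem_univ (Real.log (P x0)))
      (Set.mem_univ (Real.log (Q x0))) hlogne
      (by linarith : (0:ℝ) < 1 - lam) hl0 (by ring)
    simp only [smul_eq_mul] at h
    calc Real.exp ((1 - lam) * Real.log (P x0) + lam * Real.log (Q x0))
        < (1 - lam) * Real.exp (Real.log (P x0)) + lam * Real.exp (Real.log (Q x0)) := h
      _ = (1 - lam) * P x0 + lam * Q x0 := by rw [Real.exp_log (hP x0), Real.exp_log (hQ x0)]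
  calc ∑ x, P x * Real.exp (-lam * (Real.log (P x) - Real.log (Q x)))
      < ∑ x, ((1 - lam) * P x + lam * Q x) :=
        Finset.sum_lt_sum hle ⟨x0, Finset.mem_univ x0, hlt⟩
    _ = 1 := by rw [Finset.sum_add_distrib, ← Finset.mul_sum, ← Finset.mul_sum, hsP, hsQ]; ring

lemma run_fst_mem (ρ0 ρ1 : Mat (Fin d)) (m0 m1 : Fin d → Mat (Fin d)) (b : Bool)
    (k : ℕ) (x : Fin k → Fin d) :
    (run ρ0 ρ1 m0 m1 b k x).1 = m0 ∨ (run ρ0 ρ1 m0 m1 b k x).1 = m1 := by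
  cases k with
  | zero => cases b <;> simp [run]
  | succ k =>
    simp only [run]
    split
    · exact Or.inl rfl
    · exact Or.inr rfl

lemma Sval_zero (ρ0 ρ1 : Mat (Fin d)) (m0 m1 : Fin d → Mat (Fin d)) (b : Bool)
    (x : Fin 0 → Fin d) : Sval ρ0 ρ1 m0 m1 b 0 x = 0 := rfl

lemma Sval_succ (ρ0 ρ1 : Mat (Fin d)) (m0 m1 : Fin d → Mat (Fin d)) (b : Bool)
    (k : ℕ) (x : Fin (k+1) → Fin d) :
    Sval ρ0 ρ1 m0 m1 b (k+1) x = Sval ρ0 ρ1 m0 m1 b k (Fin.init x)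
      + llr ρ0 ρ1 ((run ρ0 ρ1 m0 m1 b k (Fin.init x)).1) (x (Fin.last k)) := rfl

lemma pathProb_zero (ρ0 ρ1 : Mat (Fin d)) (m0 m1 : Fin d → Mat (Fin d)) (ρ : Mat (Fin d))
    (b : Bool) (x : Fin 0 → Fin d) : pathProb ρ0 ρ1 m0 m1 ρ b 0 x = 1/2 := rfl

lemma pathProb_succ (ρ0 ρ1 : Mat (Fin d)) (m0 m1 : Fin d → Mat (Fin d)) (ρ : Mat (Fin d))
    (b : Bool) (k : ℕ) (x : Fin (k+1) → Fin d) :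
    pathProb ρ0 ρ1 m0 m1 ρ b (k+1) x = pathProb ρ0 ρ1 m0 m1 ρ b k (Fin.init x)
      * outProb ρ ((run ρ0 ρ1 m0 m1 b k (Fin.init x)).1) (x (Fin.last k)) := rfl

lemma pathProb_nonneg (ρ0 ρ1 : Mat (Fin d)) (m0 m1 : Fin d → Mat (Fin d))
    (hm0 : ∀ x, (m0 x).PosSemidef) (hm1 : ∀ x, (m1 x).PosSemidef)
    {ρ : Mat (Fin d)} (hρ : ρ.PosSemidef) (b : Bool) :
    ∀ k (x : Fin k → Fin d), 0 ≤ pathProb ρ0 ρ1 m0 m1 ρ b k x := by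
  intro k
  induction k with
  | zero => intro x; rw [pathProb_zero]; norm_num
  | succ k ih =>
    intro x
    rw [pathProb_succ]
    refine mul_nonneg (ih _) ?_
    rcases run_fst_mem ρ0 ρ1 m0 m1 b k (Fin.init x) with h | h <;> rw [h]
    exacts [outProb_nonneg hρ (hm0 _), outProb_nonneg hρ (hm1 _)]

end SQHT

namespace SQHT

/-- Lemma 13(ii) in the paper: for the sign-adaptive SQPRT, for all
sufficiently small `λ > 0` there is `c ∈ (0,1)` with
`E_0[e^{−λ S_k}] ≤ c^k` and `P_0(S_k < 0) ≤ c^k` for all `k ≥ 1`. -/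
theorem sign_adaptive_exponential_decay
    (d : ℕ) (hd : 0 < d) (ρ0 ρ1 : Mat (Fin d))
    (h0 : IsState ρ0) (h1 : IsState ρ1)
    (hfs0 : ρ0.PosDef) (hfs1 : ρ1.PosDef) (hne : ρ0 ≠ ρ1)
    (m0 m1 : Fin d → Mat (Fin d))
    (hm0 : IsRankOnePVM m0) (hm1 : IsRankOnePVM m1)
    (hopt0 : KL (outProb ρ0 m0) (outProb ρ1 m0) = Dmeas ρ0 ρ1)
    (hopt1 : KL (outProb ρ1 m1) (outProb ρ0 m1) = Dmeas ρ1 ρ0) :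
    ∃ lam0 : ℝ, 0 < lam0 ∧ ∀ lam : ℝ, 0 < lam → lam ≤ lam0 →
      ∃ c : ℝ, 0 < c ∧ c < 1 ∧ ∀ k : ℕ, 1 ≤ k →
        E0 ρ0 ρ1 m0 m1 k
            (fun b x => Real.exp (-lam * Sval ρ0 ρ1 m0 m1 b k x)) ≤ c ^ k ∧
        probSneg ρ0 ρ1 m0 m1 k ≤ c ^ k := by
  haveI : Nonempty (Fin d) := Fin.pos_iff_nonempty.mp hd
  refine ⟨1/2, by norm_num, ?_⟩
  intro lam hlam hlam2
  have hl1 : lam < 1 := by linarith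
  have hP00 : ∀ x, 0 < outProb ρ0 m0 x := outProb_pos hd hfs0 hm0
  have hP10 : ∀ x, 0 < outProb ρ1 m0 x := outProb_pos hd hfs1 hm0
  have hP01 : ∀ x, 0 < outProb ρ0 m1 x := outProb_pos hd hfs0 hm1
  have hP11 : ∀ x, 0 < outProb ρ1 m1 x := outProb_pos hd hfs1 hm1
  have hs00 : ∑ x, outProb ρ0 m0 x = 1 := sum_outProb h0 hm0.2.1
  have hs10 : ∑ x, outProb ρ1 m0 x = 1 := sum_outProb h1 hm0.2.1
  have hs01 : ∑ x, outProb ρ0 m1 x = 1 := sum_outProb h0 hm1.2.1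
  have hs11 : ∑ x, outProb ρ1 m1 x = 1 := sum_outProb h1 hm1.2.1
  have hD0 : 0 < Dmeas ρ0 ρ1 := Dmeas_pos hd h0 h1 hfs0 hfs1 hne
  have hD1 : 0 < Dmeas ρ1 ρ0 := Dmeas_pos hd h1 h0 hfs1 hfs0 (Ne.symm hne)
  have hne0 : outProb ρ0 m0 ≠ outProb ρ1 m0 := by
    intro h
    rw [h, KL_self] at hopt0
    rw [← hopt0] at hD0
    exact lt_irrefl 0 hD0
  have hne1 : outProb ρ0 m1 ≠ outProb ρ1 m1 := by
    intro h
    rw [h, KL_self] at hopt1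
    rw [← hopt1] at hD1
    exact lt_irrefl 0 hD1
  obtain ⟨x0, hx0⟩ := Function.ne_iff.mp hne0
  obtain ⟨x1, hx1⟩ := Function.ne_iff.mp hne1
  set φ : (Fin d → Mat (Fin d)) → ℝ :=
    fun m => ∑ y, outProb ρ0 m y * Real.exp (-lam * llr ρ0 ρ1 m y) with hφdef
  have hφ0 : φ m0 < 1 := by
    have := phi_lt_one hlam hl1 hP00 hP10 hs00 hs10 hx0
    simpa [hφdef, llr] using this
  have hφ1 : φ m1 < 1 := by
    have := phi_lt_one hlam hl1 hP01 hP11 hs01 hs11 hx1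
    simpa [hφdef, llr] using this
  have hφpos : ∀ m : Fin d → Mat (Fin d), (∀ x, 0 < outProb ρ0 m x) → 0 < φ m := by
    intro m hm
    exact Finset.sum_pos (fun x _ => mul_pos (hm x) (Real.exp_pos _)) Finset.univ_nonempty
  set c := max (φ m0) (φ m1) with hcdef
  have hc0 : 0 < c := lt_of_lt_of_le (hφpos m0 hP00) (le_max_left _ _)
  have hc1 : c < 1 := max_lt hφ0 hφ1
  have hstep : ∀ (b : Bool) (k : ℕ) (x : Fin k → Fin d),
      φ ((run ρ0 ρ1 m0 m1 b k x).1) ≤ c := by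
    intro b k x
    rcases run_fst_mem ρ0 ρ1 m0 m1 b k x with h | h <;> rw [h]
    exacts [le_max_left _ _, le_max_right _ _]
  have hpath : ∀ (b : Bool) (k : ℕ) (x : Fin k → Fin d),
      0 ≤ pathProb ρ0 ρ1 m0 m1 ρ0 b k x :=
    fun b => pathProb_nonneg ρ0 ρ1 m0 m1 hm0.1 hm1.1 h0.1 b
  have hT : ∀ k, E0 ρ0 ρ1 m0 m1 k
      (fun b x => Real.exp (-lam * Sval ρ0 ρ1 m0 m1 b k x)) ≤ c ^ k := by
    intro k
    induction k with
    | zero =>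
      have hz : E0 ρ0 ρ1 m0 m1 0
          (fun b x => Real.exp (-lam * Sval ρ0 ρ1 m0 m1 b 0 x)) = 1 := by
        unfold E0
        rw [Fintype.sum_bool]
        have hone : ∀ b : Bool, ∑ x : Fin 0 → Fin d, pathProb ρ0 ρ1 m0 m1 ρ0 b 0 x
            * Real.exp (-lam * Sval ρ0 ρ1 m0 m1 b 0 x) = 1/2 := by
          intro b
          rw [Finset.sum_eq_single_of_mem (default : Fin 0 → Fin d) (Finset.mem_univ _)
            (fun y _ hy => absurd (Subsingleton.elim y default) hy)]
          rw [pathProb_zero, Sval_zero]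
          norm_num
        rw [hone, hone]
        norm_num
      rw [hz, pow_zero]
    | succ k ih =>
      have key : ∀ b : Bool,
          (∑ x : Fin (k+1) → Fin d, pathProb ρ0 ρ1 m0 m1 ρ0 b (k+1) x
            * Real.exp (-lam * Sval ρ0 ρ1 m0 m1 b (k+1) x))
          ≤ c * ∑ x : Fin k → Fin d, pathProb ρ0 ρ1 m0 m1 ρ0 b k x
            * Real.exp (-lam * Sval ρ0 ρ1 m0 m1 b k x) := by
        intro b
        rw [← Equiv.sum_comp (Fin.snocEquiv (fun _ => Fin d))
          (fun x => pathProb ρ0 ρ1 m0 m1 ρ0 b (k+1) x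
            * Real.exp (-lam * Sval ρ0 ρ1 m0 m1 b (k+1) x))]
        rw [Fintype.sum_prod_type]
        rw [Finset.sum_comm]
        have hterm : ∀ (x' : Fin k → Fin d) (y : Fin d),
            pathProb ρ0 ρ1 m0 m1 ρ0 b (k+1) ((Fin.snocEquiv (fun _ => Fin d)) (y, x'))
              * Real.exp (-lam * Sval ρ0 ρ1 m0 m1 b (k+1)
                  ((Fin.snocEquiv (fun _ => Fin d)) (y, x')))
            = (pathProb ρ0 ρ1 m0 m1 ρ0 b k x'
                * Real.exp (-lam * Sval ρ0 ρ1 m0 m1 b k x'))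
              * (outProb ρ0 ((run ρ0 ρ1 m0 m1 b k x').1) y
                * Real.exp (-lam * llr ρ0 ρ1 ((run ρ0 ρ1 m0 m1 b k x').1) y)) := by
          intro x' y
          have hsnoc : ((Fin.snocEquiv (fun _ => Fin d)) (y, x') : Fin (k+1) → Fin d)
              = Fin.snoc x' y := rfl
          rw [hsnoc, pathProb_succ, Sval_succ, Fin.init_snoc, Fin.snoc_last]
          rw [show -lam * (Sval ρ0 ρ1 m0 m1 b k x'
              + llr ρ0 ρ1 ((run ρ0 ρ1 m0 m1 b k x').1) y)
            = (-lam * Sval ρ0 ρ1 m0 m1 b k x')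
              + (-lam * llr ρ0 ρ1 ((run ρ0 ρ1 m0 m1 b k x').1) y) by ring]
          rw [Real.exp_add]
          ring
        calc ∑ x' : Fin k → Fin d, ∑ y : Fin d,
              pathProb ρ0 ρ1 m0 m1 ρ0 b (k+1) ((Fin.snocEquiv (fun _ => Fin d)) (y, x'))
                * Real.exp (-lam * Sval ρ0 ρ1 m0 m1 b (k+1)
                    ((Fin.snocEquiv (fun _ => Fin d)) (y, x')))
            = ∑ x' : Fin k → Fin d,
                (pathProb ρ0 ρ1 m0 m1 ρ0 b k x'
                  * Real.exp (-lam * Sval ρ0 ρ1 m0 m1 b k x'))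
                * φ ((run ρ0 ρ1 m0 m1 b k x').1) := by
              refine Finset.sum_congr rfl fun x' _ => ?_
              rw [Finset.sum_congr rfl fun y _ => hterm x' y, ← Finset.mul_sum]
          _ ≤ ∑ x' : Fin k → Fin d,
                (pathProb ρ0 ρ1 m0 m1 ρ0 b k x'
                  * Real.exp (-lam * Sval ρ0 ρ1 m0 m1 b k x')) * c := by
              refine Finset.sum_le_sum fun x' _ => ?_
              exact mul_le_mul_of_nonneg_left (hstep b k x')
                (mul_nonneg (hpath b k x') (Real.exp_pos _).le)
          _ = c * ∑ x' : Fin k → Fin d, pathProb ρ0 ρ1 m0 m1 ρ0 b k x'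
                * Real.exp (-lam * Sval ρ0 ρ1 m0 m1 b k x') := by
              rw [← Finset.sum_mul, mul_comm]
      calc E0 ρ0 ρ1 m0 m1 (k+1)
            (fun b x => Real.exp (-lam * Sval ρ0 ρ1 m0 m1 b (k+1) x))
          = ∑ b : Bool, ∑ x : Fin (k+1) → Fin d, pathProb ρ0 ρ1 m0 m1 ρ0 b (k+1) x
              * Real.exp (-lam * Sval ρ0 ρ1 m0 m1 b (k+1) x) := rfl
        _ ≤ ∑ b : Bool, c * ∑ x : Fin k → Fin d, pathProb ρ0 ρ1 m0 m1 ρ0 b k x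
              * Real.exp (-lam * Sval ρ0 ρ1 m0 m1 b k x) :=
            Finset.sum_le_sum fun b _ => key b
        _ = c * E0 ρ0 ρ1 m0 m1 k
              (fun b x => Real.exp (-lam * Sval ρ0 ρ1 m0 m1 b k x)) := by
            rw [← Finset.mul_sum]
            rfl
        _ ≤ c * c ^ k := mul_le_mul_of_nonneg_left ih hc0.le
        _ = c ^ (k+1) := by rw [pow_succ]; ring
  have hPS : ∀ k, probSneg ρ0 ρ1 m0 m1 k ≤ E0 ρ0 ρ1 m0 m1 k
      (fun b x => Real.exp (-lam * Sval ρ0 ρ1 m0 m1 b k x)) := by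
    intro k
    unfold probSneg E0
    refine Finset.sum_le_sum fun b _ => Finset.sum_le_sum fun x _ => ?_
    split
    · rename_i hS
      have h1 : (1:ℝ) ≤ Real.exp (-lam * Sval ρ0 ρ1 m0 m1 b k x) := by
        apply Real.one_le_exp
        nlinarith
      exact le_mul_of_one_le_right (hpath b k x) h1
    · exact mul_nonneg (hpath b k x) (Real.exp_pos _).le
  exact ⟨c, hc0, hc1, fun k _ => ⟨hT k, (hPS k).trans (hT k)⟩⟩


end SQHT
end
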